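/- Suppose the pair (b, b_year) of real numbers satisfies the population normal equations Cov(ln D, ln L) = −b·Var(ln D) − b_year·Cov(ln D, Y) and Cov(Y − Y₀, ln L) = −b·Cov(ln D, Y) − b_year·Var(Y), where ln L is generated by the DGP ln L = ln B − β·ln D − β_year·(Y − Y₀) − β·ε with Cov(Y, ε) = 0, and suppose the Gram determinant Var(ln D)·Var(Y) − Cov(ln D, Y)² is nonzero. Then the probability limit of the OLS coefficient on calendar time satisfies b_year = β_year − β·Cov(ln D, ε)·Cov(ln D, Y) / (Var(ln D)·Var(Y) − Cov(ln D, Y)²). -/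

import Mathlib

open MeasureTheory ProbabilityTheory

/-- Covariance of two real-valued random variables with respect to a measure `μ`. -/
noncomputable def cov {Ω : Type*} [MeasurableSpace Ω] (μ : Measure Ω) (X Y : Ω → ℝ) : ℝ :=
  ∫ ω, (X ω - ∫ x, X x ∂μ) * (Y ω - ∫ x, Y x ∂μ) ∂μ

private lemma int_mul_L2 {Ω : Type*} [MeasurableSpace Ω] {μ : Measure Ω}
    {f g : Ω → ℝ} (hf : MemLp f 2 μ) (hg : MemLp g 2 μ) :
    Integrable (fun ω => f ω * g ω) μ := by
  have h := hf.integrable_sq.add hg.integrable_sq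
  refine (h.const_mul (1/2)).mono' (hf.aestronglyMeasurable.mul hg.aestronglyMeasurable) ?_
  filter_upwards with ω
  simp only [Pi.add_apply, Pi.pow_apply, Real.norm_eq_abs]
  nlinarith [abs_mul_abs_self (f ω), abs_mul_abs_self (g ω), abs_mul (f ω) (g ω),
    sq_nonneg (|f ω| - |g ω|)]

private lemma cov_expand {Ω : Type*} [MeasurableSpace Ω] (μ : Measure Ω) [IsProbabilityMeasure μ]
    {W X Y ε : Ω → ℝ} (hW : MemLp W 2 μ) (hX : MemLp X 2 μ) (hY : MemLp Y 2 μ)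
    (hε : MemLp ε 2 μ) (c p q r : ℝ) {Z : Ω → ℝ}
    (hZ : ∀ ω, Z ω = c - p * X ω - q * Y ω - r * ε ω) :
    cov μ W Z = -(p * cov μ W X) - q * cov μ W Y - r * cov μ W ε := by
  have hXi := hX.integrable one_le_two
  have hYi := hY.integrable one_le_two
  have hεi := hε.integrable one_le_two
  have hZfun : Z = fun ω => c - p * X ω - q * Y ω - r * ε ω := funext hZ
  have hI1 : Integrable (fun x => c - p * X x) μ := (integrable_const c).sub (hXi.const_mul p)
  have hI2 : Integrable (fun x => c - p * X x - q * Y x) μ := hI1.sub (hYi.const_mul q)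
  have hEZ : (∫ x, Z x ∂μ) = c - p * (∫ x, X x ∂μ) - q * (∫ x, Y x ∂μ) - r * (∫ x, ε x ∂μ) := by
    rw [hZfun, integral_sub hI2 (hεi.const_mul r), integral_sub hI1 (hYi.const_mul q),
      integral_sub (integrable_const c) (hXi.const_mul p),
      integral_const, integral_const_mul, integral_const_mul, integral_const_mul]
    simp
  have hW' : MemLp (fun ω => W ω - ∫ x, W x ∂μ) 2 μ := hW.sub (memLp_const _)
  have hX' : MemLp (fun ω => X ω - ∫ x, X x ∂μ) 2 μ := hX.sub (memLp_const _)
  have hY' : MemLp (fun ω => Y ω - ∫ x, Y x ∂μ) 2 μ := hY.sub (memLp_const _)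
  have hε' : MemLp (fun ω => ε ω - ∫ x, ε x ∂μ) 2 μ := hε.sub (memLp_const _)
  have key : ∀ ω, (W ω - ∫ x, W x ∂μ) * (Z ω - ∫ x, Z x ∂μ) =
      (-p) * ((W ω - ∫ x, W x ∂μ) * (X ω - ∫ x, X x ∂μ)) +
      (-q) * ((W ω - ∫ x, W x ∂μ) * (Y ω - ∫ x, Y x ∂μ)) +
      (-r) * ((W ω - ∫ x, W x ∂μ) * (ε ω - ∫ x, ε x ∂μ)) := by
    intro ω; rw [hZ ω, hEZ]; ring
  unfold cov
  rw [integral_congr_ae (ae_of_all _ key)]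
  have hA : Integrable (fun ω => (-p) * ((W ω - ∫ x, W x ∂μ) * (X ω - ∫ x, X x ∂μ))) μ :=
    (int_mul_L2 hW' hX').const_mul _
  have hB : Integrable (fun ω => (-q) * ((W ω - ∫ x, W x ∂μ) * (Y ω - ∫ x, Y x ∂μ))) μ :=
    (int_mul_L2 hW' hY').const_mul _
  have hC : Integrable (fun ω => (-r) * ((W ω - ∫ x, W x ∂μ) * (ε ω - ∫ x, ε x ∂μ))) μ :=
    (int_mul_L2 hW' hε').const_mul _
  have hAB : Integrable (fun ω => (-p) * ((W ω - ∫ x, W x ∂μ) * (X ω - ∫ x, X x ∂μ)) +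
      (-q) * ((W ω - ∫ x, W x ∂μ) * (Y ω - ∫ x, Y x ∂μ))) μ := hA.add hB
  rw [integral_add hAB hC, integral_add hA hB,
    integral_const_mul, integral_const_mul, integral_const_mul]
  ring

private lemma cov_comm {Ω : Type*} [MeasurableSpace Ω] (μ : Measure Ω) (X Y : Ω → ℝ) :
    cov μ X Y = cov μ Y X := by
  unfold cov; simp_rw [mul_comm]

private lemma var_eq_cov {Ω : Type*} [MeasurableSpace Ω] (μ : Measure Ω) [IsProbabilityMeasure μ]
    {X : Ω → ℝ} (hX : MemLp X 2 μ) : variance X μ = cov μ X X := by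
  rw [variance_eq_integral hX.aestronglyMeasurable.aemeasurable]
  unfold cov
  congr 1
  funext ω
  simp [sq]

/-- Probability limit of the OLS coefficient on calendar time from the misspecified
regression. -/
theorem plim_beta_year_hat {Ω : Type*} [MeasurableSpace Ω] (μ : Measure Ω) [IsProbabilityMeasure μ]
    (X Y ε : Ω → ℝ) (hX : MemLp X 2 μ) (hY : MemLp Y 2 μ) (hε : MemLp ε 2 μ)
    (β β_year lnB Y₀ : ℝ) (lnL : Ω → ℝ)
    (hlnL : ∀ ω, lnL ω = lnB - β * X ω - β_year * (Y ω - Y₀) - β * ε ω)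
    (hYε : cov μ Y ε = 0) (b b_year : ℝ)
    (h1 : cov μ X lnL = -b * variance X μ - b_year * cov μ X Y)
    (h2 : cov μ (fun ω => Y ω - Y₀) lnL = -b * cov μ X Y - b_year * variance Y μ)
    (hGram : variance X μ * variance Y μ - (cov μ X Y) ^ 2 ≠ 0) :
    b_year = β_year - β * cov μ X ε * cov μ X Y /
      (variance X μ * variance Y μ - (cov μ X Y) ^ 2) := by
  have hlnL' : ∀ ω, lnL ω = (lnB + β_year * Y₀) - β * X ω - β_year * Y ω - β * ε ω := by
    intro ω; rw [hlnL ω]; ring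
  -- cov of first arg shifted by constant
  have hshift : cov μ (fun ω => Y ω - Y₀) lnL = cov μ Y lnL := by
    unfold cov
    have hEY : (∫ x, Y x - Y₀ ∂μ) = (∫ x, Y x ∂μ) - Y₀ := by
      rw [integral_sub (hY.integrable one_le_two) (integrable_const _)]; simp
    rw [hEY]
    congr 1; funext ω; ring_nf
  have e1 : cov μ X lnL = -(β * cov μ X X) - β_year * cov μ X Y - β * cov μ X ε :=
    cov_expand μ hX hX hY hε _ _ _ _ hlnL'
  have e2 : cov μ Y lnL = -(β * cov μ Y X) - β_year * cov μ Y Y - β * cov μ Y ε :=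
    cov_expand μ hY hX hY hε _ _ _ _ hlnL'
  rw [var_eq_cov μ hX] at h1 hGram ⊢
  rw [var_eq_cov μ hY] at h2 hGram ⊢
  rw [e1] at h1
  rw [hshift, e2, hYε, cov_comm μ Y X] at h2
  set A := cov μ X X
  set C := cov μ X Y
  set D := cov μ Y Y
  set e := cov μ X ε
  field_simp
  linear_combination A * h2 - C * h1
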